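/- arXiv:2104.05841 — 6 statements merged into one kernel-verified Lean document; each statement's English description precedes it below -/
import Mathlib

section
/- For the bar map associated to an N-periodic parity sequence and for any i ∈ ℤ, the preimage B_s(i) = { j ∈ ℤ : \overline{j} = i } is a nonempty finite set, provided m ≠ n. -/
/-- For `m ≠ n`, every fiber `B_s(i) = {j | bar j = i}` of the bar map is a
nonempty finite set. -/
theorem bar_map_fibers_nonempty_finite
    (m n : ℕ) (hmn : m ≠ n) (hN : 3 ≤ m + n)
    (s : ℤ → ℤ) (hs : ∀ i, s i = 1 ∨ s i = -1)
    (hper : ∀ i : ℤ, s (i + (m + n)) = s i)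
    (hcount : ((Finset.Icc (1 : ℤ) (m + n)).filter (fun i => s i = 1)).card = m)
    (bar : ℤ → ℤ) (hbar0 : bar 0 = 0)
    (hbar : ∀ j : ℤ, bar (j + 1) = bar j + s (j + 1)) :
    ∀ i : ℤ, {j : ℤ | bar j = i}.Nonempty ∧ {j : ℤ | bar j = i}.Finite := by
  set Nn : ℤ := (m : ℤ) + n with hNndef
  set d : ℤ := (m : ℤ) - n with hddef
  have hNn3 : 3 ≤ Nn := by omega
  have hd0 : d ≠ 0 := by omega
  -- bar of naturals as sum
  have hbarnat : ∀ k : ℕ, bar k = ∑ t ∈ Finset.Icc (1:ℤ) k, s t := by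
    intro k
    induction k with
    | zero => simpa using hbar0
    | succ k ih =>
      have h1 := hbar k
      have h2 : Finset.Icc (1:ℤ) ((k:ℤ)+1) = insert ((k:ℤ)+1) (Finset.Icc (1:ℤ) k) := by
        ext x; simp [Finset.mem_Icc]; omega
      push_cast
      rw [h2, Finset.sum_insert (by simp), h1, ih]; ring
  have hbarN : bar Nn = d := by
    have h1 : bar ((m+n : ℕ) : ℤ) = ∑ t ∈ Finset.Icc (1:ℤ) ((m+n:ℕ):ℤ), s t := hbarnat (m+n)
    have hc : ((m+n : ℕ) : ℤ) = Nn := by push_cast; ring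
    rw [hc] at h1
    have hsplit := Finset.sum_filter_add_sum_filter_not (Finset.Icc (1:ℤ) Nn)
      (fun t => s t = 1) s
    have hA : ∑ t ∈ (Finset.Icc (1:ℤ) Nn).filter (fun t => s t = 1), s t = (m : ℤ) := by
      rw [Finset.sum_congr rfl (fun t ht => (Finset.mem_filter.mp ht).2), Finset.sum_const,
        hcount]; simp
    have hcardIcc : (Finset.Icc (1:ℤ) Nn).card = m + n := by
      rw [Int.card_Icc]; omega
    have hcardB : ((Finset.Icc (1:ℤ) Nn).filter (fun t => ¬ s t = 1)).card = n := by
      have := Finset.card_filter_add_card_filter_not (s := Finset.Icc (1:ℤ) Nn)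
        (p := fun t => s t = 1)
      omega
    have hB : ∑ t ∈ (Finset.Icc (1:ℤ) Nn).filter (fun t => ¬ s t = 1), s t = -(n : ℤ) := by
      have heach : ∀ t ∈ (Finset.Icc (1:ℤ) Nn).filter (fun t => ¬ s t = 1), s t = -1 := by
        intro t ht
        rcases hs t with h | h
        · exact absurd h (Finset.mem_filter.mp ht).2
        · exact h
      rw [Finset.sum_congr rfl heach, Finset.sum_const, hcardB]; simp
    rw [← hsplit, hA, hB] at h1
    rw [h1]; omega
  -- the increment over one period is constant
  have hgstep : ∀ j : ℤ, bar (j + 1 + Nn) - bar (j + 1) = bar (j + Nn) - bar j := by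
    intro j
    have h1 := hbar (j + Nn)
    have h2 := hbar j
    have h3 : s (j + Nn + 1) = s (j + 1) := by
      rw [show j + Nn + 1 = (j + 1) + Nn by ring]; exact hper (j+1)
    rw [show j + 1 + Nn = j + Nn + 1 by ring, h1, h2, h3]; ring
  have hshift : ∀ j : ℤ, bar (j + Nn) = bar j + d := by
    have key : ∀ j : ℤ, bar (j + Nn) - bar j = d := by
      intro j
      induction j using Int.induction_on with
      | zero => rw [zero_add, hbar0, hbarN]; ring
      | succ k ih => rw [hgstep k]; exact ih
      | pred k ih =>
        have h := hgstep (-(k:ℤ) - 1)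
        rw [show -(k:ℤ) - 1 + 1 = -(k:ℤ) by ring] at h
        rw [← h]; exact ih
    intro j; have := key j; omega
  have hshiftmul : ∀ (q r : ℤ), bar (r + q * Nn) = bar r + q * d := by
    intro q r
    induction q using Int.induction_on with
    | zero => simp
    | succ k ih =>
      rw [show r + ((k:ℤ)+1)*Nn = (r + k*Nn) + Nn by ring, hshift, ih]; ring
    | pred k ih =>
      have h := hshift (r + (-(k:ℤ)-1)*Nn)
      rw [show r + (-(k:ℤ)-1)*Nn + Nn = r + -(k:ℤ)*Nn by ring] at h
      linear_combination ih - h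
  -- Lipschitz bounds
  have hlip : ∀ (k : ℕ) (j : ℤ), bar j - k ≤ bar (j + k) ∧ bar (j + k) ≤ bar j + k := by
    intro k
    induction k with
    | zero => intro j; simp
    | succ k ih =>
      intro j
      have h1 := ih j
      have h2 := hbar (j + k)
      push_cast
      rw [show j + ((k:ℤ)+1) = j + (k:ℤ) + 1 by ring]
      rcases hs (j + k + 1) with h | h <;> omega
  -- discrete IVT, both directions
  have ivt_up : ∀ (k : ℕ) (j v : ℤ), bar j ≤ v → v ≤ bar (j + k) → ∃ t, bar t = v := by
    intro k
    induction k with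
    | zero => intro j v h1 h2; exact ⟨j, by simp at h2; omega⟩
    | succ k ih =>
      intro j v h1 h2
      push_cast at h2
      rw [show j + ((k:ℤ)+1) = j + (k:ℤ) + 1 by ring] at h2
      rcases le_or_gt v (bar (j + k)) with h | h
      · exact ih j v h1 h
      · refine ⟨j + k + 1, ?_⟩
        have hb := hbar (j + k)
        rcases hs (j + k + 1) with hx | hx <;> omega
  have ivt_down : ∀ (k : ℕ) (j v : ℤ), bar (j + k) ≤ v → v ≤ bar j → ∃ t, bar t = v := by
    intro k
    induction k with
    | zero => intro j v h1 h2; exact ⟨j, by simp at h1; omega⟩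
    | succ k ih =>
      intro j v h1 h2
      push_cast at h1
      rw [show j + ((k:ℤ)+1) = j + (k:ℤ) + 1 by ring] at h1
      rcases le_or_gt (bar (j + k)) v with h | h
      · exact ih j v h h2
      · refine ⟨j + k + 1, ?_⟩
        have hb := hbar (j + k)
        rcases hs (j + k + 1) with hx | hx <;> omega
  intro i
  have hNnpos : 0 < Nn := by omega
  constructor
  · -- nonempty
    set K : ℤ := (i.natAbs : ℤ) with hK
    have hK0 : 0 ≤ K := Int.natCast_nonneg _
    have hKi : -K ≤ i ∧ i ≤ K := by constructor <;> omega
    have hlo : bar (0 + (-K) * Nn) = -K * d := by rw [hshiftmul, hbar0]; ring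
    have hhi : bar (0 + K * Nn) = K * d := by rw [hshiftmul, hbar0]; ring
    have hcast : (0:ℤ) + (-K) * Nn + ((2 * (m+n) * i.natAbs : ℕ) : ℤ) = 0 + K * Nn := by
      rw [hK, hNndef]; push_cast; ring
    rcases lt_or_gt_of_ne hd0 with hdneg | hdpos
    · -- d ≤ -1 : bar decreasing along periods
      have c1 : bar ((0:ℤ) + (-K)*Nn + ((2 * (m+n) * i.natAbs : ℕ) : ℤ)) ≤ i := by
        rw [hcast, hhi]
        nlinarith [mul_nonneg hK0 (by omega : (0:ℤ) ≤ -d - 1)]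
      have c2 : i ≤ bar ((0:ℤ) + (-K)*Nn) := by
        rw [hlo]
        nlinarith [mul_nonneg hK0 (by omega : (0:ℤ) ≤ -d - 1)]
      obtain ⟨t, ht⟩ := ivt_down (2 * (m+n) * i.natAbs) (0 + (-K)*Nn) i c1 c2
      exact ⟨t, ht⟩
    · -- d ≥ 1
      have c1 : bar ((0:ℤ) + (-K)*Nn) ≤ i := by
        rw [hlo]
        nlinarith [mul_nonneg hK0 (by omega : (0:ℤ) ≤ d - 1)]
      have c2 : i ≤ bar ((0:ℤ) + (-K)*Nn + ((2 * (m+n) * i.natAbs : ℕ) : ℤ)) := by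
        rw [hcast, hhi]
        nlinarith [mul_nonneg hK0 (by omega : (0:ℤ) ≤ d - 1)]
      obtain ⟨t, ht⟩ := ivt_up (2 * (m+n) * i.natAbs) (0 + (-K)*Nn) i c1 c2
      exact ⟨t, ht⟩
  · -- finite
    apply Set.Finite.subset (Set.finite_Icc (-(Nn*(|i|+Nn)+Nn)) (Nn*(|i|+Nn)+Nn))
    intro j hj
    simp only [Set.mem_setOf_eq] at hj
    set q := j / Nn with hq
    set r := j % Nn with hr
    have hr0 : 0 ≤ r := Int.emod_nonneg j (by omega)
    have hrN : r < Nn := Int.emod_lt_of_pos j hNnpos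
    have hj' : j = r + q * Nn := by
      rw [hq, hr]; linear_combination - Int.mul_ediv_add_emod j Nn
    have hbarj : bar j = bar r + q * d := by
      have h := hshiftmul q r
      rw [← hj'] at h; exact h
    have hlr := hlip r.toNat 0
    rw [show (0:ℤ) + (r.toNat : ℤ) = r by omega] at hlr
    have hbr : -Nn ≤ bar r ∧ bar r ≤ Nn := by
      rw [hbar0] at hlr; constructor <;> omega
    have hqd : q * d = i - bar r := by linarith [hbarj, hj]
    have habs : |q| ≤ |i| + Nn := by
      have h1 : |q| ≤ |q * d| := by
        rw [abs_mul]
        exact le_mul_of_one_le_right (abs_nonneg q) (Int.one_le_abs hd0)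
      rw [hqd] at h1
      have h2 : |i - bar r| ≤ |i| + Nn := by
        calc |i - bar r| ≤ |i| + |bar r| := abs_sub i (bar r)
          _ ≤ |i| + Nn := by
              have := abs_le.mpr ⟨hbr.1, hbr.2⟩; linarith
      linarith
    rw [Set.mem_Icc]
    have h3 : |j| ≤ Nn*(|i|+Nn)+Nn := by
      calc |j| = |r + q * Nn| := by rw [← hj']
        _ ≤ |r| + |q * Nn| := abs_add_le _ _
        _ = r + |q| * Nn := by
            rw [abs_mul, abs_of_nonneg hr0, abs_of_nonneg (le_of_lt hNnpos)]
        _ ≤ Nn + (|i| + Nn) * Nn := by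
            have := mul_le_mul_of_nonneg_right habs (le_of_lt hNnpos)
            linarith
        _ = Nn*(|i|+Nn)+Nn := by ring
    exact abs_le.mp h3
end

section
/- For the bar map associated to an N-periodic parity sequence with m ≠ n, if j₁, j₂ ∈ B_s(i) (i.e. \overline{j_1} = \overline{j_2} = i) and j₁ ≠ j₂, then j₁ ≢ j₂ (mod m+n). -/
/-- For `m ≠ n`, two distinct elements of the same fiber `B_s(i)` of the bar map
are incongruent modulo `m + n`. -/
theorem bar_map_fiber_incongruent
    (m n : ℕ) (hmn : m ≠ n) (hN : 3 ≤ m + n)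
    (s : ℤ → ℤ) (hs : ∀ i, s i = 1 ∨ s i = -1)
    (hper : ∀ i : ℤ, s (i + (m + n)) = s i)
    (hcount : ((Finset.Icc (1 : ℤ) (m + n)).filter (fun i => s i = 1)).card = m)
    (bar : ℤ → ℤ) (hbar0 : bar 0 = 0)
    (hbar : ∀ j : ℤ, bar (j + 1) = bar j + s (j + 1)) :
    ∀ i j₁ j₂ : ℤ, bar j₁ = i → bar j₂ = i → j₁ ≠ j₂ →
      ¬ ((m + n : ℤ) ∣ (j₁ - j₂)) := by
  set N : ℤ := (m + n : ℤ) with hNdef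
  have hbar' : ∀ j : ℤ, bar (j - 1) = bar j - s j := by
    intro j
    have := hbar (j - 1)
    simp only [sub_add_cancel] at this
    omega
  -- bar on natural numbers is the partial sum
  have hbarnat : ∀ k : ℕ, bar (k : ℤ) = ∑ i ∈ Finset.Icc (1 : ℤ) (k : ℤ), s i := by
    intro k
    induction k with
    | zero => simp [hbar0]
    | succ k ih =>
      have h1 : ((k + 1 : ℕ) : ℤ) = (k : ℤ) + 1 := by push_cast; ring
      rw [h1, hbar, ih]
      have hins : Finset.Icc (1 : ℤ) ((k : ℤ) + 1) = insert ((k : ℤ) + 1) (Finset.Icc 1 (k : ℤ)) := by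
        ext x
        simp only [Finset.mem_Icc, Finset.mem_insert]
        omega
      rw [hins, Finset.sum_insert (by simp)]
      ring
  -- the sum over a period equals m - n
  have hC : bar N = (m : ℤ) - n := by
    have h1 : bar N = ∑ i ∈ Finset.Icc (1 : ℤ) N, s i := by
      have := hbarnat (m + n); push_cast at this ⊢; exact this
    rw [h1]
    have hsplit := Finset.sum_filter_add_sum_filter_not (Finset.Icc (1 : ℤ) N)
      (fun i => s i = 1) s
    have hA : ∑ i ∈ (Finset.Icc (1 : ℤ) N).filter (fun i => s i = 1), s i = (m : ℤ) := by
      rw [Finset.sum_congr rfl (fun i hi => (Finset.mem_filter.mp hi).2), Finset.sum_const,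
        hcount]; simp
    have hB : ∑ i ∈ (Finset.Icc (1 : ℤ) N).filter (fun i => ¬ s i = 1), s i = -(n : ℤ) := by
      rw [Finset.sum_congr rfl (fun i hi => by
        have h2 := (Finset.mem_filter.mp hi).2
        rcases hs i with h | h
        · exact absurd h h2
        · exact h), Finset.sum_const]
      have hcard2 : ((Finset.Icc (1 : ℤ) N).filter (fun i => ¬ s i = 1)).card = n := by
        have := Finset.card_filter_add_card_filter_not
          (s := Finset.Icc (1 : ℤ) N) (p := fun i => s i = 1)
        have hcc : (Finset.Icc (1 : ℤ) N).card = m + n := by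
          rw [Int.card_Icc]; simp [hNdef]; omega
        omega
      rw [hcard2]; simp
    omega
  have hCne : bar N ≠ 0 := by rw [hC]; omega
  -- period shift
  have hshift : ∀ j : ℤ, bar (j + N) = bar j + bar N := by
    intro j
    induction j using Int.induction_on with
    | zero => simp [hbar0]
    | succ k ih =>
      have h1 : ((k : ℤ) + 1 + N) = ((k : ℤ) + N) + 1 := by ring
      rw [h1, hbar, ih]
      have h2 : ((k : ℤ) + N + 1) = ((k : ℤ) + 1) + N := by ring
      rw [h2, hper, hbar]
      ring
    | pred k ih =>
      have h1 : (-(k : ℤ) - 1 + N) = (-(k : ℤ) + N) - 1 := by ring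
      rw [h1, hbar', ih]
      have h2 : (-(k : ℤ) + N) = (-(k : ℤ)) + N := by ring
      rw [h2, hper, hbar']
      ring
  -- iterate
  have hiter : ∀ k : ℤ, ∀ j : ℤ, bar (j + k * N) = bar j + k * bar N := by
    intro k
    induction k using Int.induction_on with
    | zero => simp
    | succ k ih =>
      intro j
      have h1 : j + ((k : ℤ) + 1) * N = (j + (k : ℤ) * N) + N := by ring
      rw [h1, hshift, ih]; ring
    | pred k ih =>
      intro j
      have h2 : bar ((j + (-(k : ℤ) - 1) * N) + N) = bar (j + (-(k : ℤ) - 1) * N) + bar N :=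
        hshift _
      have h3 : (j + (-(k : ℤ) - 1) * N) + N = j + (-(k : ℤ)) * N := by ring
      rw [h3] at h2
      have h4 := ih j
      have h5 : (-(k : ℤ) - 1) * bar N = (-(k : ℤ)) * bar N - bar N := by ring
      linarith
  intro i j₁ j₂ h1 h2 hne ⟨k, hk⟩
  have : bar (j₂ + k * N) = bar j₂ + k * bar N := hiter k j₂
  have hj : j₂ + k * N = j₁ := by rw [mul_comm] at hk; omega
  rw [hj, h1, h2] at this
  have hk0 : k = 0 := by
    have : k * bar N = 0 := by linarith
    rcases mul_eq_zero.mp this with h | h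
    · exact h
    · exact absurd h hCne
  rw [hk0] at hk
  simp at hk
  omega
end

section
/- The number of s-partitions with n boxes is greater than or equal to the number of ordinary partitions of n. (Here an s-partition is a pair (λ, μ) where λ is an s⁻₊-partition, μ is an s⁻₋-partition, ℓ(λ) ≥ ℓ(μ), the total number of boxes is |λ| + |μ| = n, and every ordinary partition λ of n gives the s-partition (λ, ∅).) -/
namespace SPartAux

/-- The "column count" function of a multiset of naturals:
`cfun M j` is the number of parts of `M` that are `≥ j`. -/
def cfun (M : Multiset ℕ) (j : ℕ) : ℕ := (M.filter (fun x => j ≤ x)).card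

lemma cfun_anti (M : Multiset ℕ) {j k : ℕ} (h : j ≤ k) : cfun M k ≤ cfun M j := by
  apply Multiset.card_le_card
  apply Multiset.monotone_filter_right
  intro x hx; exact h.trans hx

lemma cfun_le_card (M : Multiset ℕ) (j : ℕ) : cfun M j ≤ Multiset.card M :=
  Multiset.card_le_card (Multiset.filter_le _ _)

lemma card_le_sum {M : Multiset ℕ} (hM : ∀ x ∈ M, 0 < x) : Multiset.card M ≤ M.sum := by
  induction M using Multiset.induction with
  | empty => simp
  | cons a M ih =>
    simp only [Multiset.card_cons, Multiset.sum_cons]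
    have ha : 0 < a := hM a (Multiset.mem_cons_self a M)
    have := ih (fun x hx => hM x (Multiset.mem_cons_of_mem hx))
    omega

lemma cfun_eq_zero {M : Multiset ℕ} {j : ℕ} (h : M.sum < j) : cfun M j = 0 := by
  rw [cfun, Multiset.card_eq_zero, Multiset.filter_eq_nil]
  intro x hx hjx
  have : x ≤ M.sum := Multiset.le_sum_of_mem hx
  omega

/-- A downward-closed (within positive naturals) finset of naturals contained in
`Icc 1 N` equals `Icc 1 card`. -/
lemma downclosed_eq_Icc {S : Finset ℕ} {N : ℕ} (hS : S ⊆ Finset.Icc 1 N)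
    (hdc : ∀ j ∈ S, ∀ k, 1 ≤ k → k ≤ j → k ∈ S) : S = Finset.Icc 1 S.card := by
  have hsub : S ⊆ Finset.Icc 1 S.card := by
    intro j hj
    have h1 : 1 ≤ j := (Finset.mem_Icc.mp (hS hj)).1
    by_contra hcon
    have hj' : S.card < j := by
      rw [Finset.mem_Icc] at hcon; omega
    have hIcc : Finset.Icc 1 j ⊆ S := fun k hk => by
      rw [Finset.mem_Icc] at hk; exact hdc j hj k hk.1 hk.2
    have := Finset.card_le_card hIcc
    rw [Nat.card_Icc] at this
    omega
  exact Finset.eq_of_subset_of_card_le hsub (by rw [Nat.card_Icc]; omega)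

section Main

variable (M : Multiset ℕ) (n : ℕ)

/-- The conjugate column count relative to bound `n`. -/
def Dfun (i : ℕ) : ℕ := ((Finset.Icc 1 n).filter (fun j => i ≤ cfun M j)).card

/-- Side of the Durfee square. -/
def dval : ℕ := ((Finset.Icc 1 n).filter (fun j => j ≤ cfun M j)).card

variable {M n}
variable (hM : ∀ x ∈ M, 0 < x) (hsum : M.sum = n)

include hM hsum

lemma cfun_le_n (j : ℕ) : cfun M j ≤ n := by
  calc cfun M j ≤ Multiset.card M := cfun_le_card M j
    _ ≤ M.sum := card_le_sum hM
    _ = n := hsum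

omit hM

lemma filter_cfun_eq_Icc {i : ℕ} (hi : 1 ≤ i) :
    (Finset.Icc 1 n).filter (fun j => i ≤ cfun M j) = Finset.Icc 1 (Dfun M n i) := by
  rw [Dfun]
  apply downclosed_eq_Icc (Finset.filter_subset _ _)
  intro j hj k hk1 hkj
  rw [Finset.mem_filter, Finset.mem_Icc] at hj ⊢
  exact ⟨⟨hk1, hkj.trans hj.1.2⟩, hj.2.trans (cfun_anti M hkj)⟩

/-- The Galois correspondence between `cfun` and `Dfun`. -/
lemma galois {i j : ℕ} (hi : 1 ≤ i) (hj : 1 ≤ j) :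
    i ≤ cfun M j ↔ j ≤ Dfun M n i := by
  constructor
  · intro h
    have hjn : j ≤ n := by
      by_contra hc
      rw [cfun_eq_zero (by omega : M.sum < j)] at h; omega
    have : j ∈ (Finset.Icc 1 n).filter (fun j => i ≤ cfun M j) := by
      rw [Finset.mem_filter, Finset.mem_Icc]; exact ⟨⟨hj, hjn⟩, h⟩
    rw [filter_cfun_eq_Icc hsum hi, Finset.mem_Icc] at this
    exact this.2
  · intro h
    have : j ∈ (Finset.Icc 1 n).filter (fun j => i ≤ cfun M j) := by
      rw [filter_cfun_eq_Icc hsum hi, Finset.mem_Icc]; exact ⟨hj, h⟩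
    exact (Finset.mem_filter.mp this).2

lemma filter_dval_eq_Icc :
    (Finset.Icc 1 n).filter (fun j => j ≤ cfun M j) = Finset.Icc 1 (dval M n) := by
  rw [dval]
  apply downclosed_eq_Icc (Finset.filter_subset _ _)
  intro j hj k hk1 hkj
  rw [Finset.mem_filter, Finset.mem_Icc] at hj ⊢
  exact ⟨⟨hk1, hkj.trans hj.1.2⟩, le_trans hkj (hj.2.trans (cfun_anti M hkj))⟩

/-- For `j ≥ 1`, `j ≤ cfun M j ↔ j ≤ dval`. -/
lemma le_cfun_iff_le_dval {j : ℕ} (hj : 1 ≤ j) : j ≤ cfun M j ↔ j ≤ dval M n := by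
  constructor
  · intro h
    have hjn : j ≤ n := by
      by_contra hc
      rw [cfun_eq_zero (by omega : M.sum < j)] at h; omega
    have : j ∈ (Finset.Icc 1 n).filter (fun j => j ≤ cfun M j) := by
      rw [Finset.mem_filter, Finset.mem_Icc]; exact ⟨⟨hj, hjn⟩, h⟩
    rw [filter_dval_eq_Icc hsum, Finset.mem_Icc] at this
    exact this.2
  · intro h
    have : j ∈ (Finset.Icc 1 n).filter (fun j => j ≤ cfun M j) := by
      rw [filter_dval_eq_Icc hsum, Finset.mem_Icc]; exact ⟨hj, h⟩
    exact (Finset.mem_filter.mp this).2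

end Main

end SPartAux
namespace SPartAux
section Main2
variable {M : Multiset ℕ} {n : ℕ}
variable (hM : ∀ x ∈ M, 0 < x) (hsum : M.sum = n)

lemma Dfun_anti {i k : ℕ} (h : i ≤ k) : Dfun M n k ≤ Dfun M n i := by
  apply Finset.card_le_card
  intro j hj
  rw [Finset.mem_filter] at hj ⊢
  exact ⟨hj.1, h.trans hj.2⟩

lemma Dfun_le_n (i : ℕ) : Dfun M n i ≤ n := by
  calc Dfun M n i ≤ (Finset.Icc 1 n).card := Finset.card_le_card (Finset.filter_subset _ _)
    _ = n := by rw [Nat.card_Icc]; omega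

lemma dval_le_n : dval M n ≤ n := by
  calc dval M n ≤ (Finset.Icc 1 n).card := Finset.card_le_card (Finset.filter_subset _ _)
    _ = n := by rw [Nat.card_Icc]; omega

include hsum

lemma dval_le_cfun {j : ℕ} (h1 : 1 ≤ j) (h2 : j ≤ dval M n) : dval M n ≤ cfun M j := by
  have hd1 : 1 ≤ dval M n := h1.trans h2
  have hd : dval M n ≤ cfun M (dval M n) := (le_cfun_iff_le_dval hsum hd1).mpr le_rfl
  exact hd.trans (cfun_anti M h2)

lemma dval_le_Dfun {i : ℕ} (h1 : 1 ≤ i) (h2 : i ≤ dval M n) : dval M n ≤ Dfun M n i := by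
  have hd1 : 1 ≤ dval M n := h1.trans h2
  have hd : dval M n ≤ cfun M (dval M n) := (le_cfun_iff_le_dval hsum hd1).mpr le_rfl
  have := (galois hsum hd1 hd1).mp hd
  exact this.trans (Dfun_anti h2)

lemma Dfun_le_dval {i : ℕ} (h : dval M n < i) : Dfun M n i ≤ dval M n := by
  have h1 : ¬ (dval M n + 1 ≤ cfun M (dval M n + 1)) := by
    intro hc
    have := (le_cfun_iff_le_dval hsum (by omega)).mp hc
    omega
  have h2 : Dfun M n (dval M n + 1) ≤ dval M n := by
    by_contra hc
    push_neg at hc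
    have := (galois hsum (by omega : 1 ≤ dval M n + 1) (by omega : 1 ≤ dval M n + 1)).mpr hc
    exact h1 this
  exact le_trans (Dfun_anti (by omega)) h2

lemma cfun_le_dval {j : ℕ} (h : dval M n < j) : cfun M j ≤ dval M n := by
  have h1 : ¬ (dval M n + 1 ≤ cfun M (dval M n + 1)) := by
    intro hc
    have := (le_cfun_iff_le_dval hsum (by omega)).mp hc
    omega
  have h2 : cfun M (dval M n + 1) ≤ dval M n := by omega
  exact le_trans (cfun_anti M (by omega)) h2

omit hsum

/-- Double counting: sum of column counts is the number of boxes. -/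
lemma sum_cfun_eq (M : Multiset ℕ) : ∀ N, (∀ x ∈ M, x ≤ N) →
    ∑ j ∈ Finset.Icc 1 N, cfun M j = M.sum := by
  induction M using Multiset.induction with
  | empty => intro N _; simp [cfun]
  | cons a M ih =>
    intro N hN
    have hc : ∀ j, cfun (a ::ₘ M) j = cfun M j + if j ≤ a then 1 else 0 := by
      intro j
      rw [cfun, cfun, Multiset.filter_cons]
      split <;> simp [add_comm]
    simp only [hc, Finset.sum_add_distrib, Multiset.sum_cons]
    rw [ih N (fun x hx => hN x (Multiset.mem_cons_of_mem hx)), Finset.sum_boole]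
    have ha : a ≤ N := hN a (Multiset.mem_cons_self a M)
    have hf : (Finset.Icc 1 N).filter (fun x => x ≤ a) = Finset.Icc 1 a := by
      ext x; simp only [Finset.mem_filter, Finset.mem_Icc]; omega
    rw [hf, Nat.card_Icc]
    simp only [Nat.cast_id]
    omega

end Main2
end SPartAux
namespace SPartAux
section Main3
variable {M : Multiset ℕ} {n : ℕ}
variable (hM : ∀ x ∈ M, 0 < x) (hsum : M.sum = n)
include hM hsum

lemma sum_tail :
    ∑ j ∈ Finset.Ioc (dval M n) n, cfun M j
      = ∑ i ∈ Finset.Icc 1 (dval M n), (Dfun M n i - dval M n) := by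
  set d := dval M n with hd
  have hcle : ∀ j, cfun M j ≤ n := fun j => cfun_le_n hM hsum j
  have hDle : ∀ i, Dfun M n i ≤ n := fun i => Dfun_le_n i
  have step1 : ∀ j ∈ Finset.Ioc d n, cfun M j
      = ∑ i ∈ Finset.Icc 1 n, if i ≤ cfun M j then 1 else 0 := by
    intro j _
    rw [Finset.sum_boole]
    have : (Finset.Icc 1 n).filter (fun i => i ≤ cfun M j) = Finset.Icc 1 (cfun M j) := by
      ext x
      simp only [Finset.mem_filter, Finset.mem_Icc]
      have := hcle j
      omega
    rw [this, Nat.card_Icc]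
    simp only [Nat.cast_id]
    omega
  rw [Finset.sum_congr rfl step1, Finset.sum_comm]
  have step2 : ∀ i ∈ Finset.Icc 1 n,
      (∑ j ∈ Finset.Ioc d n, if i ≤ cfun M j then 1 else 0) = Dfun M n i - d := by
    intro i hi
    rw [Finset.mem_Icc] at hi
    rw [Finset.sum_boole]
    have : (Finset.Ioc d n).filter (fun j => i ≤ cfun M j) = Finset.Ioc d (Dfun M n i) := by
      ext j
      simp only [Finset.mem_filter, Finset.mem_Ioc]
      constructor
      · rintro ⟨⟨h1, h2⟩, h3⟩
        exact ⟨h1, (galois hsum hi.1 (by omega)).mp h3⟩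
      · rintro ⟨h1, h2⟩
        refine ⟨⟨h1, h2.trans (hDle i)⟩, (galois hsum hi.1 (by omega)).mpr h2⟩
    rw [this, Nat.card_Ioc]
    simp only [Nat.cast_id]
  rw [Finset.sum_congr rfl step2]
  -- now restrict the sum from Icc 1 n to Icc 1 d
  have hdn : d ≤ n := dval_le_n
  have hsplit : Finset.Icc 1 n = Finset.Icc 1 d ∪ Finset.Ioc d n := by
    ext x
    simp only [Finset.mem_union, Finset.mem_Icc, Finset.mem_Ioc]
    omega
  rw [hsplit, Finset.sum_union (by
    rw [Finset.disjoint_left]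
    intro x hx hx'
    rw [Finset.mem_Icc] at hx
    rw [Finset.mem_Ioc] at hx'
    omega)]
  have hzero : ∀ i ∈ Finset.Ioc d n, Dfun M n i - d = 0 := by
    intro i hi
    rw [Finset.mem_Ioc] at hi
    have := Dfun_le_dval hsum hi.1
    omega
  rw [Finset.sum_congr rfl hzero]
  simp

lemma main_identity :
    ∑ i ∈ Finset.Icc 1 (dval M n), Dfun M n i
      + ∑ j ∈ Finset.Icc 1 (dval M n), cfun M j
      = n + dval M n * dval M n := by
  set d := dval M n with hd
  have hdn : d ≤ n := dval_le_n
  have hsplit : Finset.Icc 1 n = Finset.Icc 1 d ∪ Finset.Ioc d n := by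
    ext x
    simp only [Finset.mem_union, Finset.mem_Icc, Finset.mem_Ioc]
    omega
  have hdisj : Disjoint (Finset.Icc 1 d) (Finset.Ioc d n) := by
    rw [Finset.disjoint_left]
    intro x hx hx'
    rw [Finset.mem_Icc] at hx
    rw [Finset.mem_Ioc] at hx'
    omega
  have htot : ∑ j ∈ Finset.Icc 1 n, cfun M j = n := by
    rw [sum_cfun_eq M n (fun x hx => hsum ▸ Multiset.le_sum_of_mem hx), hsum]
  rw [hsplit, Finset.sum_union hdisj, sum_tail hM hsum] at htot
  rw [← hd] at htot
  -- ∑_{i ∈ Icc 1 d} (Dfun i - d) = ∑ Dfun i - d * d, valid since Dfun i ≥ d there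
  have hsub : ∑ i ∈ Finset.Icc 1 d, (Dfun M n i - d) + d * d
      = ∑ i ∈ Finset.Icc 1 d, Dfun M n i := by
    have : ∀ i ∈ Finset.Icc 1 d, (Dfun M n i - d) + d = Dfun M n i := by
      intro i hi
      rw [Finset.mem_Icc] at hi
      have := dval_le_Dfun hsum hi.1 hi.2
      omega
    calc ∑ i ∈ Finset.Icc 1 d, (Dfun M n i - d) + d * d
        = ∑ i ∈ Finset.Icc 1 d, ((Dfun M n i - d) + d) := by
          rw [Finset.sum_add_distrib, Finset.sum_const, Nat.card_Icc]
          simp [Nat.mul_comm]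
      _ = ∑ i ∈ Finset.Icc 1 d, Dfun M n i := Finset.sum_congr rfl this
  omega

end Main3
end SPartAux
namespace SPartAux

lemma cfun_cons (a : ℕ) (M : Multiset ℕ) (j : ℕ) :
    cfun (a ::ₘ M) j = cfun M j + if j ≤ a then 1 else 0 := by
  rw [cfun, cfun, Multiset.filter_cons]
  split <;> simp [add_comm]

lemma gauss_sq (d : ℕ) :
    (∑ i ∈ Finset.range d, i) + (∑ j ∈ Finset.range d, (j + 1)) = d * d := by
  induction d with
  | zero => simp
  | succ k ih =>
    rw [Finset.sum_range_succ, Finset.sum_range_succ]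
    have hk : (k + 1) * (k + 1) = k * k + 2 * k + 1 := by ring
    linarith

lemma cfun_succ_add_count (M : Multiset ℕ) (x : ℕ) :
    cfun M x = cfun M (x + 1) + M.count x := by
  induction M using Multiset.induction with
  | empty => simp [cfun]
  | cons a M ih =>
    rw [cfun_cons, cfun_cons, Multiset.count_cons, ih]
    have : (a = x → (x ≤ a ∧ ¬ x + 1 ≤ a)) ∧ (a ≠ x → ((x ≤ a ↔ x + 1 ≤ a))) := by omega
    split_ifs <;> omega

section Lists

variable (M : Multiset ℕ) (n : ℕ)

/-- First list of the Frobenius symbol (1-based `a_i = D i - i + 1`). -/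
def Alist : List ℕ := (List.range (dval M n)).map (fun i => Dfun M n (i + 1) - i)

/-- Second list of the Frobenius symbol before removing the possible zero. -/
def Bpre : List ℕ := (List.range (dval M n)).map (fun j => cfun M (j + 1) - (j + 1))

/-- Second list of the Frobenius symbol. -/
def Blist : List ℕ := (Bpre M n).filter (fun x => decide (0 < x))

@[simp] lemma length_Alist : (Alist M n).length = dval M n := by simp [Alist]

@[simp] lemma length_Bpre : (Bpre M n).length = dval M n := by simp [Bpre]

variable {M n}
variable (hM : ∀ x ∈ M, 0 < x) (hsum : M.sum = n)
include hsum

lemma Alist_pos : ∀ x ∈ Alist M n, 0 < x := by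
  intro x hx
  rw [Alist, List.mem_map] at hx
  obtain ⟨i, hi, rfl⟩ := hx
  rw [List.mem_range] at hi
  have := dval_le_Dfun hsum (by omega : 1 ≤ i + 1) (by omega)
  omega

lemma Alist_sdec : List.Chain' (fun a b => b < a) (Alist M n) := by
  rw [List.Chain', List.isChain_iff_getElem]
  intro i hi
  simp only [Alist, List.length_map, List.length_range] at hi
  simp only [Alist, List.getElem_map, List.getElem_range]
  have h1 : i + 1 + 1 ≤ dval M n := by omega
  have h2 := dval_le_Dfun hsum (by omega : 1 ≤ i + 1 + 1) h1
  have h3 := Dfun_anti (M := M) (n := n) (by omega : i + 1 ≤ i + 1 + 1)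
  omega

lemma Bpre_sdec : List.Chain' (fun a b => b < a) (Bpre M n) := by
  rw [List.Chain', List.isChain_iff_getElem]
  intro i hi
  simp only [Bpre, List.length_map, List.length_range] at hi
  simp only [Bpre, List.getElem_map, List.getElem_range]
  have h1 : i + 1 + 1 ≤ dval M n := by omega
  have h2 := dval_le_cfun hsum (by omega : 1 ≤ i + 1 + 1) h1
  have h3 := cfun_anti M (by omega : i + 1 ≤ i + 1 + 1)
  omega

lemma Blist_sdec : List.Chain' (fun a b => b < a) (Blist M n) :=
  List.IsChain.sublist (Bpre_sdec hsum) List.filter_sublist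

lemma Blist_pos : ∀ x ∈ Blist M n, 0 < x := by
  intro x hx
  rw [Blist, List.mem_filter] at hx
  exact of_decide_eq_true hx.2

lemma Blist_length_le : (Blist M n).length ≤ (Alist M n).length := by
  rw [length_Alist, ← length_Bpre (M := M) (n := n)]
  exact List.length_filter_le _ _

omit hsum
lemma filter_pos_sum (l : List ℕ) : (l.filter (fun x => decide (0 < x))).sum = l.sum := by
  induction l with
  | nil => rfl
  | cons a t ih =>
    by_cases ha : 0 < a
    · simp [List.filter_cons, ha, ih]
    · simp only [List.filter_cons]
      have : a = 0 := by omega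
      simp [this, ih]

include hM hsum

lemma AB_sum : (Alist M n).sum + (Blist M n).sum = n := by
  have hB : (Blist M n).sum = (Bpre M n).sum := filter_pos_sum _
  have hA : (Alist M n).sum = ∑ i ∈ Finset.range (dval M n), (Dfun M n (i + 1) - i) := rfl
  have hBp : (Bpre M n).sum = ∑ j ∈ Finset.range (dval M n), (cfun M (j + 1) - (j + 1)) := rfl
  set d := dval M n with hd
  have hA2 : (Alist M n).sum + ∑ i ∈ Finset.range d, i = ∑ i ∈ Finset.range d, Dfun M n (i + 1) := by
    rw [hA, ← Finset.sum_add_distrib]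
    apply Finset.sum_congr rfl
    intro i hi
    rw [Finset.mem_range] at hi
    have := dval_le_Dfun hsum (by omega : 1 ≤ i + 1) (by omega)
    omega
  have hB2 : (Bpre M n).sum + ∑ j ∈ Finset.range d, (j + 1) = ∑ j ∈ Finset.range d, cfun M (j + 1) := by
    rw [hBp, ← Finset.sum_add_distrib]
    apply Finset.sum_congr rfl
    intro j hj
    rw [Finset.mem_range] at hj
    have := dval_le_cfun hsum (by omega : 1 ≤ j + 1) (by omega)
    omega
  have hIcc : Finset.Icc 1 d = Finset.Ico 1 (d + 1) := by
    ext x; simp [Finset.mem_Icc, Finset.mem_Ico]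
  have hDsum : ∑ i ∈ Finset.range d, Dfun M n (i + 1) = ∑ i ∈ Finset.Icc 1 d, Dfun M n i := by
    rw [hIcc, Finset.sum_Ico_eq_sum_range]
    simp [add_comm]
  have hcsum : ∑ j ∈ Finset.range d, cfun M (j + 1) = ∑ j ∈ Finset.Icc 1 d, cfun M j := by
    rw [hIcc, Finset.sum_Ico_eq_sum_range]
    simp [add_comm]
  have hmain := main_identity hM hsum
  rw [← hd] at hmain
  have hd0 := gauss_sq d
  omega

end Lists
end SPartAux
namespace SPartAux

/-- Two strictly decreasing lists of naturals of the same length with the same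
positive parts are equal. -/
lemma sdec_filter_inj : ∀ (l₁ l₂ : List ℕ),
    List.Chain' (fun a b => b < a) l₁ → List.Chain' (fun a b => b < a) l₂ →
    l₁.length = l₂.length →
    l₁.filter (fun x => decide (0 < x)) = l₂.filter (fun x => decide (0 < x)) →
    l₁ = l₂ := by
  intro l₁
  induction l₁ with
  | nil =>
    intro l₂ _ _ hlen _
    cases l₂ with
    | nil => rfl
    | cons b t₂ => simp at hlen
  | cons a t ih =>
    intro l₂ h1 h2 hlen hf
    cases l₂ with
    | nil => simp at hlen
    | cons b t₂ =>
      by_cases ha : 0 < a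
      · by_cases hb : 0 < b
        · rw [List.filter_cons_of_pos (by simpa using ha),
              List.filter_cons_of_pos (by simpa using hb)] at hf
          simp only [List.cons.injEq] at hf ⊢
          obtain ⟨hab, hf2⟩ := hf
          exact ⟨hab, ih t₂ h1.tail h2.tail (by simpa using hlen) hf2⟩
        · -- b = 0, so t₂ = [] and l₂ = [0]; then l₁ has length 1, filter l₁ = []
          have hb0 : b = 0 := by omega
          subst hb0
          have ht₂ : t₂ = [] := by
            cases t₂ with
            | nil => rfl
            | cons c r =>
              have := (List.isChain_cons_cons.mp h2).1
              omega
          subst ht₂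
          have ht : t = [] := by
            simp at hlen
            exact hlen
          subst ht
          simp [List.filter_cons, ha] at hf
      · have ha0 : a = 0 := by omega
        subst ha0
        have ht : t = [] := by
          cases t with
          | nil => rfl
          | cons c r =>
            have := (List.isChain_cons_cons.mp h1).1
            omega
        subst ht
        have ht₂ : t₂ = [] := by
          simp at hlen
          exact hlen
        subst ht₂
        by_cases hb : 0 < b
        · simp [List.filter_cons, hb] at hf
        · have : b = 0 := by omega
          rw [this]

lemma map_range_inj {k : ℕ} {f g : ℕ → ℕ}
    (h : (List.range k).map f = (List.range k).map g) : ∀ i < k, f i = g i := by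
  intro i hi
  have hl : i < ((List.range k).map f).length := by simpa using hi
  have := List.getElem_of_eq h hl
  simpa using this

section Recon
variable {M : Multiset ℕ} {n : ℕ}
variable (hM : ∀ x ∈ M, 0 < x) (hsum : M.sum = n)
include hM hsum

lemma cfun_high {j : ℕ} (hj : dval M n < j) (hj1 : 1 ≤ j) :
    cfun M j = ((Finset.Icc 1 (dval M n)).filter (fun i => j ≤ Dfun M n i)).card := by
  have hcn : cfun M j ≤ n := cfun_le_n hM hsum j
  have h1 : cfun M j = (Finset.Icc 1 (cfun M j)).card := by rw [Nat.card_Icc]; omega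
  rw [h1]
  congr 1
  ext i
  simp only [Finset.mem_Icc, Finset.mem_filter]
  constructor
  · rintro ⟨hi1, hi2⟩
    have hgal := (galois hsum hi1 hj1).mp hi2
    have hid : i ≤ dval M n := by
      by_contra hcon
      have := Dfun_le_dval hsum (by omega : dval M n < i)
      omega
    exact ⟨⟨hi1, hid⟩, hgal⟩
  · rintro ⟨⟨hi1, hi2⟩, hgal⟩
    exact ⟨hi1, (galois hsum hi1 hj1).mpr hgal⟩

end Recon

lemma recon {M M' : Multiset ℕ} {n : ℕ}
    (hM : ∀ x ∈ M, 0 < x) (hM' : ∀ x ∈ M', 0 < x)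
    (hsum : M.sum = n) (hsum' : M'.sum = n)
    (hd : dval M n = dval M' n)
    (hD : ∀ i, 1 ≤ i → i ≤ dval M n → Dfun M n i = Dfun M' n i)
    (hc : ∀ j, 1 ≤ j → j ≤ dval M n → cfun M j = cfun M' j) : M = M' := by
  have hcall : ∀ j, 1 ≤ j → cfun M j = cfun M' j := by
    intro j hj
    by_cases h : j ≤ dval M n
    · exact hc j hj h
    · push_neg at h
      rw [cfun_high hM hsum h hj, cfun_high hM' hsum' (hd ▸ h) hj, ← hd]
      congr 1
      apply Finset.filter_congr
      intro i hi
      rw [Finset.mem_Icc] at hi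
      rw [hD i hi.1 hi.2]
  ext x
  by_cases hx : x = 0
  · subst hx
    rw [Multiset.count_eq_zero_of_notMem (fun hmem => by have := hM 0 hmem; omega),
        Multiset.count_eq_zero_of_notMem (fun hmem => by have := hM' 0 hmem; omega)]
  · have hx1 : 1 ≤ x := by omega
    have e1 := cfun_succ_add_count M x
    have e2 := cfun_succ_add_count M' x
    have e3 := hcall x hx1
    have e4 := hcall (x + 1) (by omega)
    omega

lemma chain_of_sdec {l : List ℕ} (h : List.Chain' (fun a b => b < a) l) (t : ℤ → ℤ) :
    List.Chain' (fun a b => b ≤ a ∧ (a = b → t (a : ℤ) = -1)) l := by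
  simp only [List.pure_def, List.bind_eq_flatMap]
  rw [← List.map_eq_flatMap, List.Chain', List.isChain_map]
  unfold List.Chain' at h
  refine h.imp (fun a b hb => ⟨?_, fun he => ?_⟩)
  · exact_mod_cast hb.le
  · have : (a : ℤ) ≠ (b : ℤ) := by exact_mod_cast (by omega : a ≠ b)
    exact absurd he this

end SPartAux
/-- `l` is an `s⁻₊`-partition: positive weakly decreasing parts, with
consecutive equal parts `a = b` allowed only if `s a = -1`. -/
def IsSMinusPlusList (s : ℤ → ℤ) (l : List ℕ) : Prop :=
  (∀ x ∈ l, 0 < x) ∧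
    List.Chain' (fun a b => b ≤ a ∧ (a = b → s (a : ℤ) = -1)) l

/-- `l` is an `s⁻₋`-partition: positive weakly decreasing parts, with
consecutive equal parts `a = b` allowed only if `s (−a) = -1`. -/
def IsSMinusMinusList (s : ℤ → ℤ) (l : List ℕ) : Prop :=
  (∀ x ∈ l, 0 < x) ∧
    List.Chain' (fun a b => b ≤ a ∧ (a = b → s (-(a : ℤ)) = -1)) l

/-- The number of `s`-partitions with `n` boxes is at least the number of
ordinary partitions of `n`: there is an injection from partitions of `n` into
pairs `(λ, μ)` with `λ` an `s⁻₊`-partition, `μ` an `s⁻₋`-partition,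
`ℓ(λ) ≥ ℓ(μ)` and `|λ| + |μ| = n`. -/
theorem sPartitions_at_least_partitions
    (s : ℤ → ℤ) (hs : ∀ i, s i = 1 ∨ s i = -1) (n : ℕ) :
    ∃ f : n.Partition →
        {p : List ℕ × List ℕ //
          IsSMinusPlusList s p.1 ∧ IsSMinusMinusList s p.2 ∧
            p.2.length ≤ p.1.length ∧ p.1.sum + p.2.sum = n},
      Function.Injective f := by
  classical
  refine ⟨fun p => ⟨(SPartAux.Alist p.parts n, SPartAux.Blist p.parts n), ?_, ?_, ?_, ?_⟩, ?_⟩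
  · exact ⟨SPartAux.Alist_pos p.parts_sum,
      SPartAux.chain_of_sdec (SPartAux.Alist_sdec p.parts_sum) s⟩
  · exact ⟨SPartAux.Blist_pos p.parts_sum,
      SPartAux.chain_of_sdec (SPartAux.Blist_sdec p.parts_sum) (fun a => s (-a))⟩
  · simpa using SPartAux.Blist_length_le (M := p.parts) (n := n) p.parts_sum
  · exact SPartAux.AB_sum (fun x hx => p.parts_pos hx) p.parts_sum
  · intro p q h
    simp only [Subtype.mk.injEq, Prod.mk.injEq] at h
    obtain ⟨hA, hB⟩ := h
    have hsp : p.parts.sum = n := p.parts_sum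
    have hsq : q.parts.sum = n := q.parts_sum
    have hd : SPartAux.dval p.parts n = SPartAux.dval q.parts n := by
      have := congrArg List.length hA
      simpa using this
    have hD : ∀ i, 1 ≤ i → i ≤ SPartAux.dval p.parts n →
        SPartAux.Dfun p.parts n i = SPartAux.Dfun q.parts n i := by
      intro i hi1 hi2
      rw [SPartAux.Alist, SPartAux.Alist, ← hd] at hA
      have := SPartAux.map_range_inj hA (i - 1) (by omega)
      have hb1 := SPartAux.dval_le_Dfun hsp hi1 hi2
      have hb2 := SPartAux.dval_le_Dfun hsq hi1 (hd ▸ hi2)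
      have hi : i - 1 + 1 = i := by omega
      rw [hi] at this
      omega
    have hBpre : SPartAux.Bpre p.parts n = SPartAux.Bpre q.parts n := by
      apply SPartAux.sdec_filter_inj _ _ (SPartAux.Bpre_sdec hsp) (SPartAux.Bpre_sdec hsq)
      · simp [hd]
      · exact hB
    have hc : ∀ j, 1 ≤ j → j ≤ SPartAux.dval p.parts n →
        SPartAux.cfun p.parts j = SPartAux.cfun q.parts j := by
      intro j hj1 hj2
      rw [SPartAux.Bpre, SPartAux.Bpre, ← hd] at hBpre
      have := SPartAux.map_range_inj hBpre (j - 1) (by omega)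
      have hb1 := SPartAux.dval_le_cfun hsp hj1 hj2
      have hb2 := SPartAux.dval_le_cfun hsq hj1 (hd ▸ hj2)
      have hj : j - 1 + 1 = j := by omega
      rw [hj] at this
      omega
    have : p.parts = q.parts :=
      SPartAux.recon (fun x hx => p.parts_pos hx) (fun x hx => q.parts_pos hx)
        hsp hsq hd hD hc
    cases p; cases q
    simpa using this
end

section
/- There is a grading-preserving bijection between the set of plane s-partitions (with vertex color k and infinitely many layers, all but finitely many empty) and the set of admissible pairs (T⁽¹⁾, T⁽²⁾) of reverse semistandard Young super-tableaux of the same shape, where T⁽¹⁾ has parity s and T⁽²⁾ has parity s' (s'_i = s_{1−i}), given by reading λ⁽ⁱ⁾ as column i of T⁽¹⁾ and μ⁽ⁱ⁾ + 1 as column i of T⁽²⁾. -/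
/-- A partition written as a function: weakly decreasing, finitely many
nonzero parts. -/
def IsPartFun (f : ℕ → ℕ) : Prop :=
  (∀ i j : ℕ, i ≤ j → f j ≤ f i) ∧ ∃ n : ℕ, ∀ m : ℕ, n ≤ m → f m = 0

/-- A layer of a plane `s`-partition (with vertex color `0`, `s 0 = -1`): a
pair `(λ, μ)` of partitions with `ℓ(λ) ≥ ℓ(μ)`, consecutive equal parts of `λ`
allowed only at odd colors (`s λᵢ = -1`), and similarly for `μ`
(`s (-μᵢ) = -1`). -/
def IsSPartLayer (s : ℤ → ℤ) (p : (ℕ → ℕ) × (ℕ → ℕ)) : Prop :=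
  IsPartFun p.1 ∧ IsPartFun p.2 ∧
  (∀ i, p.1 (i + 1) = p.1 i → s ((p.1 i : ℤ)) = -1 ∨ p.1 i = 0) ∧
  (∀ i, p.2 (i + 1) = p.2 i → s (-(p.2 i : ℤ)) = -1 ∨ p.2 i = 0) ∧
  (∀ i, p.2 i ≠ 0 → p.1 i ≠ 0)

/-- The relation `(λ⁽¹⁾,μ⁽¹⁾) ≥₀ (λ⁽²⁾,μ⁽²⁾)`. -/
def GeRelZero (s : ℤ → ℤ) (p q : (ℕ → ℕ) × (ℕ → ℕ)) : Prop :=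
  (∀ i, q.1 i ≠ 0 → p.2 i ≠ 0) ∧
  (∀ i, q.1 i ≠ 0 → p.1 i ≠ 0) ∧
  (∀ i, q.2 i ≠ 0 → p.2 i ≠ 0) ∧
  (∀ i, q.1 i ≤ p.1 i ∧
    (q.1 i = p.1 i → s ((p.1 i : ℤ)) = -s 0 ∨ p.1 i = 0)) ∧
  (∀ i, q.2 i ≤ p.2 i ∧
    (q.2 i = p.2 i → s (-(p.2 i : ℤ)) = -s 0 ∨ p.2 i = 0))

/-- A plane `s`-partition (vertex color `0`): a sequence of layers, each an
`s`-partition, consecutive layers comparable by `≥₀`, all but finitely many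
layers empty. -/
def IsPlaneSPart (s : ℤ → ℤ) (L : ℕ → (ℕ → ℕ) × (ℕ → ℕ)) : Prop :=
  (∀ j, IsSPartLayer s (L j)) ∧
  (∀ j, GeRelZero s (L j) (L (j + 1))) ∧
  (∃ J : ℕ, ∀ j, J ≤ j → ∀ i, (L j).1 i = 0 ∧ (L j).2 i = 0)

/-- A reverse semistandard Young super-tableau of parity `s`, encoded as a
function `T : rows × columns → ℕ` vanishing outside its (finite, Young-diagram
shaped) support: entries weakly decrease along rows with equality allowed only
if `s (entry) = 1`, and weakly decrease down columns with equality allowed only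
if `s (entry) = -1`. -/
def IsRSSYT (s : ℤ → ℤ) (T : ℕ → ℕ → ℕ) : Prop :=
  (∀ i j j' : ℕ, j' ≤ j → T i j ≠ 0 → T i j' ≠ 0) ∧
  (∀ i i' j : ℕ, i' ≤ i → T i j ≠ 0 → T i' j ≠ 0) ∧
  (∀ i j, T i (j + 1) ≠ 0 →
    T i (j + 1) ≤ T i j ∧ (T i (j + 1) = T i j → s ((T i j : ℤ)) = 1)) ∧
  (∀ i j, T (i + 1) j ≠ 0 →
    T (i + 1) j ≤ T i j ∧ (T (i + 1) j = T i j → s ((T i j : ℤ)) = -1)) ∧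
  (∃ M : ℕ, ∀ i j, M ≤ i ∨ M ≤ j → T i j = 0)

/-- The number of boxes of color `c ∈ ℤ` of a plane `s`-partition: row `i` of
`λ⁽ʲ⁾` contributes boxes of colors `0, …, λ⁽ʲ⁾ᵢ − 1`, and row `i` of `μ⁽ʲ⁾`
contributes boxes of colors `−1, …, −μ⁽ʲ⁾ᵢ`. -/
noncomputable def countPlane (L : ℕ → (ℕ → ℕ) × (ℕ → ℕ)) (c : ℤ) : ℕ :=
  {p : ℕ × ℕ | 0 ≤ c ∧ c < ((L p.1).1 p.2 : ℤ)}.ncard +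
    {p : ℕ × ℕ | -(((L p.1).2 p.2 : ℤ)) ≤ c ∧ c ≤ -1}.ncard

/-- The number of boxes of color `c ∈ ℤ` attached to a pair of tableaux: a box
of `T⁽¹⁾` with entry `a` has degree `z₀z₁⋯z_{a−1}` (one box of each color
`0, …, a − 1`), and a box of `T⁽²⁾` with entry `a` has degree
`z₋₁⋯z₋₍ₐ₋₁₎` (one box of each color `−1, …, −(a−1)`). -/
noncomputable def countTabPair (T₁ T₂ : ℕ → ℕ → ℕ) (c : ℤ) : ℕ :=
  {p : ℕ × ℕ | 0 ≤ c ∧ c < (T₁ p.1 p.2 : ℤ)}.ncard +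
    {p : ℕ × ℕ | -((T₂ p.1 p.2 : ℤ) - 1) ≤ c ∧ c ≤ -1}.ncard

namespace PSPAux

def T1 (L : ℕ → (ℕ → ℕ) × (ℕ → ℕ)) : ℕ → ℕ → ℕ := fun i j => (L j).1 i

def T2 (L : ℕ → (ℕ → ℕ) × (ℕ → ℕ)) : ℕ → ℕ → ℕ :=
  fun i j => if (L j).1 i ≠ 0 then (L j).2 i + 1 else 0

def toL (T : (ℕ → ℕ → ℕ) × (ℕ → ℕ → ℕ)) : ℕ → (ℕ → ℕ) × (ℕ → ℕ) :=
  fun j => (fun i => T.1 i j, fun i => if T.1 i j ≠ 0 then T.2 i j - 1 else 0)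

lemma forward (s : ℤ → ℤ) (hs0 : s 0 = -1) (L : ℕ → (ℕ → ℕ) × (ℕ → ℕ))
    (hL : IsPlaneSPart s L) :
    IsRSSYT s (T1 L) ∧ IsRSSYT (fun i => s (1 - i)) (T2 L) ∧
      ∀ i j, T1 L i j ≠ 0 ↔ T2 L i j ≠ 0 := by
  obtain ⟨hLay, hGe, J, hJ⟩ := hL
  have anti1 : ∀ i, Antitone fun j => (L j).1 i := fun i =>
    antitone_nat_of_succ_le fun j => ((hGe j).2.2.2.1 i).1
  have rnz : ∀ i j j', j' ≤ j → (L j).1 i ≠ 0 → (L j').1 i ≠ 0 := by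
    intro i j j' h hne
    have := anti1 i h
    simp only at this
    omega
  have cnz : ∀ i i' j, i' ≤ i → (L j).1 i ≠ 0 → (L j).1 i' ≠ 0 := by
    intro i i' j h hne
    have := (hLay j).1.1 i' i h
    omega
  choose n hn using fun j => ((hLay j).1).2
  set M := max J ((Finset.range J).sup n) + 1 with hMdef
  have hMz : ∀ i j, M ≤ i ∨ M ≤ j → (L j).1 i = 0 := by
    intro i j h
    rcases le_or_gt J j with hj | hj
    · exact (hJ j hj i).1
    · have hJM : J < M := by
        have := le_max_left J ((Finset.range J).sup n); omega
      rcases h with h | h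
      · have hnj : n j ≤ (Finset.range J).sup n :=
          Finset.le_sup (Finset.mem_range.2 hj)
        have := le_max_right J ((Finset.range J).sup n)
        exact hn j i (by omega)
      · omega
  have h2nz : ∀ i j, T2 L i j ≠ 0 ↔ (L j).1 i ≠ 0 := by
    intro i j
    simp only [T2]
    split <;> simp_all
  refine ⟨⟨?_, ?_, ?_, ?_, ⟨M, ?_⟩⟩, ⟨?_, ?_, ?_, ?_, ⟨M, ?_⟩⟩, ?_⟩
  · exact fun i j j' h hne => rnz i j j' h hne
  · exact fun i i' j h hne => cnz i i' j h hne
  · intro i j hne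
    refine ⟨((hGe j).2.2.2.1 i).1, fun heq => ?_⟩
    rcases ((hGe j).2.2.2.1 i).2 heq with h1 | h1
    · simp only [T1] at *
      omega
    · simp only [T1] at hne heq
      omega
  · intro i j hne
    refine ⟨(hLay j).1.1 i (i + 1) (Nat.le_succ i), fun heq => ?_⟩
    rcases (hLay j).2.2.1 i heq with h1 | h1
    · exact h1
    · simp only [T1] at hne heq
      omega
  · exact fun i j h => hMz i j h
  · intro i j j' h hne
    rw [h2nz] at *
    exact rnz i j j' h hne
  · intro i i' j h hne
    rw [h2nz] at *
    exact cnz i i' j h hne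
  · intro i j hne
    have hl1 : (L (j + 1)).1 i ≠ 0 := (h2nz i (j + 1)).1 hne
    have hl0 : (L j).1 i ≠ 0 := rnz i (j + 1) j (Nat.le_succ j) hl1
    have hm0 : (L j).2 i ≠ 0 := (hGe j).1 i hl1
    have hle := ((hGe j).2.2.2.2 i).1
    have hv0 : T2 L i j = (L j).2 i + 1 := by simp [T2, hl0]
    have hv1 : T2 L i (j + 1) = (L (j + 1)).2 i + 1 := by simp [T2, hl1]
    constructor
    · omega
    · intro heq
      rw [hv0, hv1] at heq
      have heq2 : (L (j + 1)).2 i = (L j).2 i := by omega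
      rcases ((hGe j).2.2.2.2 i).2 heq2 with h1 | h1
      · simp only [hv0]
        have e : (1 : ℤ) - (((L j).2 i + 1 : ℕ) : ℤ) = -((L j).2 i : ℤ) := by
          push_cast; ring
        rw [e]
        omega
      · omega
  · intro i j hne
    have hl1 : (L j).1 (i + 1) ≠ 0 := (h2nz (i + 1) j).1 hne
    have hl0 : (L j).1 i ≠ 0 := cnz (i + 1) i j (Nat.le_succ i) hl1
    have hμle : (L j).2 (i + 1) ≤ (L j).2 i :=
      (hLay j).2.1.1 i (i + 1) (Nat.le_succ i)
    have hv0 : T2 L i j = (L j).2 i + 1 := by simp [T2, hl0]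
    have hv1 : T2 L (i + 1) j = (L j).2 (i + 1) + 1 := by simp [T2, hl1]
    constructor
    · omega
    · intro heq
      rw [hv0, hv1] at heq
      have heq2 : (L j).2 (i + 1) = (L j).2 i := by omega
      have hkey : s (-(((L j).2 i : ℕ) : ℤ)) = -1 := by
        rcases (hLay j).2.2.2.1 i heq2 with h1 | h1
        · exact h1
        · rw [h1]; simpa using hs0
      simp only [hv0]
      have e : (1 : ℤ) - (((L j).2 i + 1 : ℕ) : ℤ) = -((L j).2 i : ℤ) := by
        push_cast; ring
      rw [e]
      exact hkey
  · intro i j h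
    have := hMz i j h
    simp [T2, this]
  · exact fun i j => (h2nz i j).symm

end PSPAux


namespace PSPAux

lemma backward (s : ℤ → ℤ) (hs0 : s 0 = -1) (T : (ℕ → ℕ → ℕ) × (ℕ → ℕ → ℕ))
    (h₁ : IsRSSYT s T.1) (h₂ : IsRSSYT (fun i => s (1 - i)) T.2)
    (hsh : ∀ i j, T.1 i j ≠ 0 ↔ T.2 i j ≠ 0) :
    IsPlaneSPart s (toL T) := by
  obtain ⟨r1, c1, rle1, cle1, M1, hM1⟩ := h₁
  obtain ⟨r2, c2, rle2, cle2, M2, hM2⟩ := h₂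
  -- key: if T₁ i (j+1) ≠ 0 then T₂ i j ≥ 2
  have key2 : ∀ i j, T.1 i (j + 1) ≠ 0 → 2 ≤ T.2 i j := by
    intro i j h
    have h2' : T.2 i (j + 1) ≠ 0 := (hsh _ _).1 h
    have h20 : T.2 i j ≠ 0 := (hsh _ _).1 (r1 i (j + 1) j (Nat.le_succ j) h)
    obtain ⟨hle, heq⟩ := rle2 i j h2'
    by_contra hc
    have h1t : T.2 i j = 1 := by omega
    have he : T.2 i (j + 1) = T.2 i j := by omega
    have hval : (fun i => s (1 - i)) ((T.2 i j : ℕ) : ℤ) = 1 := heq he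
    simp only [h1t] at hval
    norm_num at hval
    omega
  -- helper to extract nonzeroness of μ components
  have muval : ∀ i j, T.1 i j ≠ 0 → (toL T j).2 i = T.2 i j - 1 := by
    intro i j h; simp [toL, h]
  have muzero : ∀ i j, T.1 i j = 0 → (toL T j).2 i = 0 := by
    intro i j h; simp [toL, h]
  refine ⟨?_, ?_, M1, ?_⟩
  · intro j
    refine ⟨⟨?_, M1, fun m hm => hM1 m j (Or.inl hm)⟩,
      ⟨?_, M1, fun m hm => muzero m j (hM1 m j (Or.inl hm))⟩, ?_, ?_, ?_⟩
    · -- λ decreasing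
      intro i i' h
      exact antitone_nat_of_succ_le (fun i => by
        by_cases h0 : T.1 (i + 1) j = 0
        · simp only [toL]; omega
        · exact (cle1 i j h0).1) h
    · -- μ decreasing
      intro i i' h
      refine antitone_nat_of_succ_le (fun i => ?_) h
      by_cases h0 : T.1 (i + 1) j = 0
      · rw [muzero _ _ h0]; omega
      · have h0' : T.1 i j ≠ 0 := c1 (i + 1) i j (Nat.le_succ i) h0
        rw [muval _ _ h0, muval _ _ h0']
        have := (cle2 i j ((hsh _ _).1 h0)).1
        omega
    · -- λ equality condition
      intro i heq
      by_cases h0 : T.1 i j = 0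
      · exact Or.inr h0
      · have hne : T.1 (i + 1) j ≠ 0 := by
          simp only [toL] at heq; omega
        exact Or.inl ((cle1 i j hne).2 heq)
    · -- μ equality condition
      intro i heq
      by_cases h0 : (toL T j).2 i = 0
      · exact Or.inr h0
      · left
        have h1 : T.1 i j ≠ 0 := by
          intro hz; exact h0 (muzero _ _ hz)
        rw [muval _ _ h1] at h0 heq
        have h2nz : T.2 i j ≠ 0 := (hsh _ _).1 h1
        have h1' : T.1 (i + 1) j ≠ 0 := by
          intro hz; rw [muzero _ _ hz] at heq; omega
        rw [muval _ _ h1'] at heq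
        have h2nz' : T.2 (i + 1) j ≠ 0 := (hsh _ _).1 h1'
        have he : T.2 (i + 1) j = T.2 i j := by omega
        have hval : (fun i => s (1 - i)) ((T.2 i j : ℕ) : ℤ) = -1 :=
          (cle2 i j h2nz').2 he
        simp only at hval
        rw [muval _ _ h1]
        have e : -(((T.2 i j - 1 : ℕ)) : ℤ) = 1 - (T.2 i j : ℤ) := by omega
        rw [e]
        exact hval
    · -- μ ≠ 0 → λ ≠ 0
      intro i h hz
      exact h (muzero _ _ hz)
  · intro j
    have gr1 : ∀ i, T.1 i (j + 1) ≠ 0 → (toL T j).2 i ≠ 0 := by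
      intro i h
      have h0 := r1 i (j + 1) j (Nat.le_succ j) h
      rw [muval _ _ h0]
      have := key2 i j h
      omega
    refine ⟨gr1, ?_, ?_, ?_, ?_⟩
    · exact fun i h => r1 i (j + 1) j (Nat.le_succ j) h
    · intro i h
      have h1 : T.1 i (j + 1) ≠ 0 := by
        intro hz; exact h (muzero _ _ hz)
      exact gr1 i h1
    · intro i
      constructor
      · by_cases h0 : T.1 i (j + 1) = 0
        · simp only [toL]; omega
        · exact (rle1 i j h0).1
      · intro heq
        by_cases h0 : T.1 i j = 0
        · exact Or.inr h0
        · have hne : T.1 i (j + 1) ≠ 0 := by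
            simp only [toL] at heq; omega
          have := (rle1 i j hne).2 heq
          left
          simp only [toL]
          omega
    · intro i
      constructor
      · by_cases h0 : T.1 i (j + 1) = 0
        · rw [muzero _ _ h0]; omega
        · have h0' : T.1 i j ≠ 0 := r1 i (j + 1) j (Nat.le_succ j) h0
          rw [muval _ _ h0, muval _ _ h0']
          have := (rle2 i j ((hsh _ _).1 h0)).1
          omega
      · intro heq
        by_cases h0 : (toL T j).2 i = 0
        · exact Or.inr h0
        · left
          have h1 : T.1 i j ≠ 0 := by
            intro hz; exact h0 (muzero _ _ hz)
          rw [muval _ _ h1] at h0 heq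
          have h2nz : T.2 i j ≠ 0 := (hsh _ _).1 h1
          have h1' : T.1 i (j + 1) ≠ 0 := by
            intro hz; rw [muzero _ _ hz] at heq; omega
          rw [muval _ _ h1'] at heq
          have h2nz' : T.2 i (j + 1) ≠ 0 := (hsh _ _).1 h1'
          have he : T.2 i (j + 1) = T.2 i j := by omega
          have hval : (fun i => s (1 - i)) ((T.2 i j : ℕ) : ℤ) = 1 :=
            (rle2 i j h2nz').2 he
          simp only at hval
          rw [muval _ _ h1]
          have e : -(((T.2 i j - 1 : ℕ)) : ℤ) = 1 - (T.2 i j : ℤ) := by omega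
          rw [e]
          omega
  · intro j hj i
    have := hM1 i j (Or.inr hj)
    exact ⟨this, muzero _ _ this⟩

end PSPAux


namespace PSPAux

lemma counting (L : ℕ → (ℕ → ℕ) × (ℕ → ℕ))
    (hL : ∀ j i, (L j).2 i ≠ 0 → (L j).1 i ≠ 0) (c : ℤ) :
    countPlane L c = countTabPair (T1 L) (T2 L) c := by
  unfold countPlane countTabPair
  congr 1
  · have h1 : {p : ℕ × ℕ | 0 ≤ c ∧ c < ((T1 L p.1 p.2 : ℕ) : ℤ)} =
        Prod.swap ⁻¹' {p : ℕ × ℕ | 0 ≤ c ∧ c < (((L p.1).1 p.2 : ℕ) : ℤ)} := by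
      ext ⟨i, j⟩
      simp [T1]
    rw [h1, ← Set.image_swap_eq_preimage_swap,
      Set.ncard_image_of_injective _ Prod.swap_injective]
  · have h2 : {p : ℕ × ℕ | -((T2 L p.1 p.2 : ℤ) - 1) ≤ c ∧ c ≤ -1} =
        Prod.swap ⁻¹' {p : ℕ × ℕ | -(((L p.1).2 p.2 : ℕ) : ℤ) ≤ c ∧ c ≤ -1} := by
      ext ⟨i, j⟩
      simp only [Set.mem_setOf_eq, Set.mem_preimage, Prod.swap_prod_mk]
      by_cases h : (L j).1 i = 0
      · have hmu : (L j).2 i = 0 := by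
          by_contra hc
          exact hL j i hc h
        have hT : T2 L i j = 0 := by simp [T2, h]
        rw [hT, hmu]
        omega
      · have hT : T2 L i j = (L j).2 i + 1 := by simp [T2, h]
        rw [hT]
        push_cast
        constructor <;> intro hx <;> constructor <;> omega
    rw [h2, ← Set.image_swap_eq_preimage_swap,
      Set.ncard_image_of_injective _ Prod.swap_injective]

end PSPAux

/-- The map reading `λ⁽ʲ⁾` as column `j` of `T⁽¹⁾` and `μ⁽ʲ⁾ + 1` as column
`j` of `T⁽²⁾` is a grading-preserving bijection from plane `s`-partitions to
admissible pairs `(T⁽¹⁾, T⁽²⁾)` of reverse semistandard Young super-tableaux of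
the same shape, `T⁽¹⁾` of parity `s` and `T⁽²⁾` of parity `s'`,
`s'_i = s_{1−i}`. -/
theorem planeSPartitions_equiv_tableaux_pairs
    (s : ℤ → ℤ) (hs : ∀ i, s i = 1 ∨ s i = -1) (hs0 : s 0 = -1) :
    ∃ Φ : {L : ℕ → (ℕ → ℕ) × (ℕ → ℕ) // IsPlaneSPart s L} →
        {T : (ℕ → ℕ → ℕ) × (ℕ → ℕ → ℕ) //
          IsRSSYT s T.1 ∧ IsRSSYT (fun i => s (1 - i)) T.2 ∧
            ∀ i j, T.1 i j ≠ 0 ↔ T.2 i j ≠ 0},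
      Function.Bijective Φ ∧
      (∀ L, (Φ L).1.1 = fun i j => (L.1 j).1 i) ∧
      (∀ L, (Φ L).1.2 = fun i j =>
        if (L.1 j).1 i ≠ 0 then (L.1 j).2 i + 1 else 0) ∧
      (∀ L (c : ℤ), countPlane L.1 c = countTabPair (Φ L).1.1 (Φ L).1.2 c) := by
  classical
  refine ⟨fun L => ⟨(PSPAux.T1 L.1, PSPAux.T2 L.1),
    PSPAux.forward s hs0 L.1 L.2⟩, ⟨?_, ?_⟩, fun L => rfl, fun L => rfl, ?_⟩
  · -- injective
    intro L L' h
    have h1 : PSPAux.T1 L.1 = PSPAux.T1 L'.1 := congrArg (fun x => x.1.1) h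
    have h2 : PSPAux.T2 L.1 = PSPAux.T2 L'.1 := congrArg (fun x => x.1.2) h
    apply Subtype.ext
    funext j
    have hlam : ∀ i, (L.1 j).1 i = (L'.1 j).1 i := fun i =>
      congrFun (congrFun h1 i) j
    have hmu : ∀ i, (L.1 j).2 i = (L'.1 j).2 i := by
      intro i
      have h2' := congrFun (congrFun h2 i) j
      simp only [PSPAux.T2] at h2'
      by_cases h0 : (L.1 j).1 i = 0
      · have h0' : (L'.1 j).1 i = 0 := (hlam i) ▸ h0
        have hm : (L.1 j).2 i = 0 := by
          by_contra hc
          exact (L.2.1 j).2.2.2.2 i hc h0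
        have hm' : (L'.1 j).2 i = 0 := by
          by_contra hc
          exact (L'.2.1 j).2.2.2.2 i hc h0'
        rw [hm, hm']
      · have h0' : (L'.1 j).1 i ≠ 0 := (hlam i) ▸ h0
        rw [if_pos h0, if_pos h0'] at h2'
        omega
    exact Prod.ext (funext hlam) (funext hmu)
  · -- surjective
    rintro ⟨T, hT⟩
    refine ⟨⟨PSPAux.toL T, PSPAux.backward s hs0 T hT.1 hT.2.1 hT.2.2⟩, ?_⟩
    apply Subtype.ext
    refine Prod.ext ?_ ?_
    · rfl
    · funext i j
      show PSPAux.T2 (PSPAux.toL T) i j = T.2 i j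
      simp only [PSPAux.T2, PSPAux.toL]
      by_cases h : T.1 i j = 0
      · have : T.2 i j = 0 := by
          by_contra hc
          exact ((hT.2.2 i j).2 hc) h
        simp [h, this]
      · have h2 : T.2 i j ≠ 0 := (hT.2.2 i j).1 h
        simp only [h, ne_eq, not_false_eq_true, if_true, ite_not]
        omega
  · intro L c
    exact PSPAux.counting L.1 (fun j i => (L.2.1 j).2.2.2.2 i) c
end

section
/- A pair of partitions (λ, μ) (with λ an s⁻₊-partition, μ an s⁻₋-partition, ℓ(λ) ≥ ℓ(μ)) is 0-self-comparable, i.e. (λ, μ) ≥₀ (λ, μ), if and only if a_i = 0 whenever s_{i+1} = s₀ = −1 and b_i = 0 whenever s_i = s₀ = −1, where a_i is the number of (nonzero) rows of λ ending in a box of color i and b_i the number of columns of μ (appended with zero parts to length ℓ(λ)) ending in a box of color i. -/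
lemma periodic_of_dvd (N : ℤ) (s : ℤ → ℤ) (hper : ∀ i : ℤ, s (i + N) = s i) :
    ∀ x y : ℤ, N ∣ (x - y) → s x = s y := by
  have key : ∀ k : ℤ, ∀ y : ℤ, s (y + k * N) = s y := by
    intro k
    induction k using Int.induction_on with
    | zero => simp
    | succ p ih =>
        intro y
        have h1 : y + ((p : ℤ) + 1) * N = (y + p * N) + N := by ring
        rw [h1, hper, ih]
    | pred p ih =>
        intro y
        have h1 : y + (-(p : ℤ)) * N = (y + (-(p : ℤ) - 1) * N) + N := by ring
        have := hper (y + (-(p : ℤ) - 1) * N)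
        rw [← h1] at this
        rw [← ih y, ← this]
  intro x y hdvd
  obtain ⟨k, hk⟩ := hdvd
  have hx : x = y + k * N := by linarith
  rw [hx, key]

/-- For `s₀ = −1`, a pair `(λ, μ)` with `ℓ(λ) ≥ ℓ(μ)` is `0`-self-comparable
iff `a_i = 0` whenever `s_{i+1} = −1` and `b_i = 0` whenever `s_i = −1`, where
`a_i = #{j ≤ ℓ(λ) : λ_j ≡ i+1 (mod N)}` counts rows of `λ` ending in a box of
color `i` and `b_i = #{j ≤ ℓ(λ) : −μ_j ≡ i (mod N)}` counts columns of `μ`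
(zero-extended to length `ℓ(λ)`) ending in a box of color `i`. -/
theorem zero_self_comparable_iff
    (m n : ℕ) (hmn : m ≠ n) (hN : 3 ≤ m + n)
    (s : ℤ → ℤ) (hs : ∀ i, s i = 1 ∨ s i = -1)
    (hper : ∀ i : ℤ, s (i + (m + n)) = s i)
    (hs0 : s 0 = -1)
    (lam mu : ℕ → ℕ) (hlam : IsPartFun lam) (hmu : IsPartFun mu)
    (hlen : ∀ i, mu i ≠ 0 → lam i ≠ 0) :
    GeRelZero s (lam, mu) (lam, mu) ↔
      ((∀ i : ℤ, s (i + 1) = -1 →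
          {j : ℕ | lam j ≠ 0 ∧ ((m + n : ℤ)) ∣ ((lam j : ℤ) - (i + 1))}.ncard = 0) ∧
        (∀ i : ℤ, s i = -1 →
          {j : ℕ | lam j ≠ 0 ∧ ((m + n : ℤ)) ∣ (-(mu j : ℤ) - i)}.ncard = 0)) := by
  have hper' : ∀ x y : ℤ, ((m + n : ℤ)) ∣ (x - y) → s x = s y := by
    intro x y h
    exact periodic_of_dvd ((m + n : ℤ)) s (by intro i; exact_mod_cast hper i) x y h
  obtain ⟨L, hL⟩ := hlam.2
  have hfin : ∀ (P : ℕ → Prop), {j : ℕ | lam j ≠ 0 ∧ P j}.Finite := by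
    intro P
    apply Set.Finite.subset (Set.finite_Iio L)
    intro j hj
    simp only [Set.mem_setOf_eq] at hj
    by_contra h
    exact hj.1 (hL j (le_of_not_gt (by simpa using h)))
  constructor
  · rintro ⟨h1, -, -, h4, h5⟩
    constructor
    · intro i hsi
      rw [Set.ncard_eq_zero (hfin _), Set.eq_empty_iff_forall_notMem]
      rintro j ⟨hj, hdvd⟩
      have heq : s ((lam j : ℤ)) = s (i + 1) := hper' _ _ hdvd
      rcases (h4 j).2 rfl with h | h
      · rw [hs0] at h; rw [heq, hsi] at h; norm_num at h
      · exact hj h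
    · intro i hsi
      rw [Set.ncard_eq_zero (hfin _), Set.eq_empty_iff_forall_notMem]
      rintro j ⟨hj, hdvd⟩
      have hmuj : mu j ≠ 0 := h1 j hj
      have heq : s (-(mu j : ℤ)) = s i := hper' _ _ hdvd
      rcases (h5 j).2 rfl with h | h
      · rw [hs0] at h; rw [heq, hsi] at h; norm_num at h
      · exact hmuj h
  · rintro ⟨ha, hb⟩
    have hmu_ne : ∀ i, lam i ≠ 0 → mu i ≠ 0 := by
      intro i hi hmi
      have := hb 0 hs0
      rw [Set.ncard_eq_zero (hfin _), Set.eq_empty_iff_forall_notMem] at this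
      exact this i ⟨hi, by simp [hmi]⟩
    refine ⟨hmu_ne, fun i h => h, fun i h => h, fun i => ⟨le_rfl, fun _ => ?_⟩,
      fun i => ⟨le_rfl, fun _ => ?_⟩⟩
    · by_cases hi : lam i = 0
      · exact Or.inr hi
      · left
        rw [hs0]
        rcases hs ((lam i : ℤ)) with h | h
        · rw [h]; ring
        · exfalso
          have := ha ((lam i : ℤ) - 1) (by simpa using h)
          rw [Set.ncard_eq_zero (hfin _), Set.eq_empty_iff_forall_notMem] at this
          exact this i ⟨hi, by ring_nf; simp⟩
    · by_cases hi : mu i = 0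
      · exact Or.inr hi
      · left
        rw [hs0]
        rcases hs (-(mu i : ℤ)) with h | h
        · rw [h]; ring
        · exfalso
          have := hb (-(mu i : ℤ)) h
          rw [Set.ncard_eq_zero (hfin _), Set.eq_empty_iff_forall_notMem] at this
          exact this i ⟨hlen i hi, by simp⟩
end

section
/- The relation ≥ⱼ on pairs of partitions is conditionally transitive: if (λ⁽¹⁾,μ⁽¹⁾) ≥ⱼ (λ⁽²⁾,μ⁽²⁾) and (λ⁽²⁾,μ⁽²⁾) ≥ⱼ (λ⁽³⁾,μ⁽³⁾), and additionally ℓ(μ⁽²⁾) ≤ ℓ(λ⁽²⁾), then (λ⁽¹⁾,μ⁽¹⁾) ≥ⱼ (λ⁽³⁾,μ⁽³⁾). -/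
/-- The relation `(λ⁽¹⁾,μ⁽¹⁾) ≥ⱼ (λ⁽²⁾,μ⁽²⁾)` for pairs of partitions:
`ℓ(λ⁽²⁾) ≤ ℓ(μ⁽¹⁾)`, `ℓ(λ⁽²⁾) ≤ ℓ(λ⁽¹⁾)`, `ℓ(μ⁽²⁾) ≤ ℓ(μ⁽¹⁾)`, and entrywise
`λ⁽¹⁾_i ≥ λ⁽²⁾_i` with equality allowed only if `s (λ⁽¹⁾_i + j) = -s j` or
`λ⁽¹⁾_i = 0`, and similarly for `μ` with `s (−μ⁽¹⁾_i + j) = -s j`. -/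
def GeRel (s : ℤ → ℤ) (j : ℤ) (p q : (ℕ → ℕ) × (ℕ → ℕ)) : Prop :=
  (∀ i, q.1 i ≠ 0 → p.2 i ≠ 0) ∧
  (∀ i, q.1 i ≠ 0 → p.1 i ≠ 0) ∧
  (∀ i, q.2 i ≠ 0 → p.2 i ≠ 0) ∧
  (∀ i, q.1 i ≤ p.1 i ∧
    (q.1 i = p.1 i → s ((p.1 i : ℤ) + j) = -s j ∨ p.1 i = 0)) ∧
  (∀ i, q.2 i ≤ p.2 i ∧
    (q.2 i = p.2 i → s (-(p.2 i : ℤ) + j) = -s j ∨ p.2 i = 0))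

/-- Conditional transitivity of `≥ⱼ`: if `(λ⁽¹⁾,μ⁽¹⁾) ≥ⱼ (λ⁽²⁾,μ⁽²⁾)`,
`(λ⁽²⁾,μ⁽²⁾) ≥ⱼ (λ⁽³⁾,μ⁽³⁾)` and `ℓ(μ⁽²⁾) ≤ ℓ(λ⁽²⁾)`, then
`(λ⁽¹⁾,μ⁽¹⁾) ≥ⱼ (λ⁽³⁾,μ⁽³⁾)`. -/
theorem geRel_conditionally_transitive
    (s : ℤ → ℤ) (hs : ∀ i, s i = 1 ∨ s i = -1) (j : ℤ)
    (P₁ P₂ P₃ : (ℕ → ℕ) × (ℕ → ℕ))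
    (h₁ : IsPartFun P₁.1 ∧ IsPartFun P₁.2)
    (h₂ : IsPartFun P₂.1 ∧ IsPartFun P₂.2)
    (h₃ : IsPartFun P₃.1 ∧ IsPartFun P₃.2)
    (h12 : GeRel s j P₁ P₂) (h23 : GeRel s j P₂ P₃)
    (hlen : ∀ i, P₂.2 i ≠ 0 → P₂.1 i ≠ 0) :
    GeRel s j P₁ P₃ := by
  obtain ⟨a1, a2, a3, a4, a5⟩ := h12
  obtain ⟨b1, b2, b3, b4, b5⟩ := h23
  refine ⟨fun i h => a3 i (b1 i h), fun i h => a2 i (b2 i h),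
    fun i h => a3 i (b3 i h), fun i => ?_, fun i => ?_⟩
  · have h1 := (b4 i).1
    have h2 := (a4 i).1
    refine ⟨le_trans h1 h2, fun heq => ?_⟩
    have he2 : P₂.1 i = P₁.1 i := le_antisymm h2 (heq ▸ h1)
    exact (a4 i).2 he2
  · have h1 := (b5 i).1
    have h2 := (a5 i).1
    refine ⟨le_trans h1 h2, fun heq => ?_⟩
    have he2 : P₂.2 i = P₁.2 i := le_antisymm h2 (heq ▸ h1)
    exact (a5 i).2 he2
end
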